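/- Let T be a rooted tree with distinct positive edge weights, and define the matching bonus MS(i) = 0 if i is a leaf, and MS(i) = max over children j of ( W_{ij} · 1{W_{ij} > MS(j)} ) otherwise. Then for every node i, MS(i) = max over children j of W_{ij} · 1{edge (i,j) belongs to the greedy matching of the subtree T_i}. -/

import Mathlib

open scoped Classical

/-- Finite rooted trees with real weights on the edges: a node carries the list of
(weight of edge to child, child subtree) pairs. -/
inductive ETree : Type
  | node : List (ℝ × ETree) → ETree

namespace ETree

/-- The children (edge weight, subtree) pairs of the root. -/
def children : ETree → List (ℝ × ETree)
  | node cs => cs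

/-- The matching bonus `MS`: `MS(i) = 0` for a leaf, and
`MS(i) = max over children j of (W_{ij} · 1{W_{ij} > MS(j)})` otherwise. -/
noncomputable def mbonus : ETree → ℝ
  | node cs =>
    ((cs.attach.map fun c => if mbonus c.1.2 < c.1.1 then c.1.1 else 0).foldr max 0)
decreasing_by
  all_goals
    have h1 := List.sizeOf_lt_of_mem c.2
    have h2 : sizeOf c.1.2 < sizeOf c.1 := by
      obtain ⟨a, b⟩ := (c : ℝ × ETree)
      simp only [Prod.mk.sizeOf_spec]
      omega
    simp only [ETree.node.sizeOf_spec]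
    omega

/-- The subtree at a given address (sequence of child indices), if it exists. -/
def subtreeAt : ETree → List ℕ → Option ETree
  | t, [] => some t
  | node cs, i :: p =>
    match cs[i]? with
    | some c => subtreeAt c.2 p
    | none => none
termination_by _ p => p.length

/-- The list of addresses of all nodes of the tree. -/
def addrs : ETree → List (List ℕ)
  | node cs =>
    [] :: (List.range cs.length).flatMap fun i =>
      match h : cs[i]? with
      | some c => (addrs c.2).map (i :: ·)
      | none => []
decreasing_by
  have hmem : c ∈ cs := by
    obtain ⟨hlt, rfl⟩ := List.getElem?_eq_some_iff.mp h
    exact List.getElem_mem hlt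
  have h1 := List.sizeOf_lt_of_mem hmem
  have h2 : sizeOf c.2 < sizeOf c := by
    obtain ⟨a, b⟩ := c
    simp only [Prod.mk.sizeOf_spec]
    omega
  simp only [ETree.node.sizeOf_spec]
  omega

/-- A nonempty address denotes a node of `t` together with the edge from its parent;
`isEdge t q` says that this edge exists. -/
def isEdge (t : ETree) (q : List ℕ) : Prop := q ≠ [] ∧ (subtreeAt t q).isSome

/-- The weight of the edge leading from the parent of the node at address `q` to that node
(junk value `0` if there is no such edge). -/
def ewAt : ETree → List ℕ → ℝ
  | _, [] => 0
  | node cs, i :: p =>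
    match cs[i]? with
    | some c => if p = [] then c.1 else ewAt c.2 p
    | none => 0
termination_by _ p => p.length

/-- Two edges (indexed by the addresses of their lower endpoints) are adjacent iff they
share an endpoint. -/
def edgeAdj (q q' : List ℕ) : Prop :=
  q ≠ q' ∧ (q.dropLast = q'.dropLast ∨ q.dropLast = q' ∨ q'.dropLast = q)

end ETree

/-- Auxiliary counting lemma used for termination of the greedy recursion. -/
theorem List.countP_lt_countP {α : Type*} (l : List α) (P Q : α → Bool)
    (hPQ : ∀ x, Q x = true → P x = true) {a : α} (ha : a ∈ l) (haP : P a = true)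
    (haQ : Q a = false) : l.countP Q < l.countP P := by
  induction l with
  | nil => cases ha
  | cons b l ih =>
    rw [List.countP_cons, List.countP_cons]
    rcases List.mem_cons.mp ha with rfl | hb
    · rw [haP, haQ]
      have hle : l.countP Q ≤ l.countP P := List.countP_mono_left fun x _ hx => hPQ x hx
      simp only [Bool.false_eq_true, if_true, if_false]
      omega
    · have := ih hb
      by_cases hq : Q b = true
      · rw [hq, hPQ b hq]; omega
      · have hq' : Q b = false := by simpa using hq
        rw [hq']
        by_cases hp : P b = true
        · rw [hp]; simp only [Bool.false_eq_true, if_false, if_true]; omega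
        · have hp' : P b = false := by simpa using hp
          rw [hp']; omega

namespace ETree

/-- Membership of the edge with lower endpoint at address `q` in the matching produced by the
greedy algorithm on `t` (repeatedly pick the heaviest remaining edge, add it, delete all
edges sharing an endpoint): an edge is selected iff no heavier adjacent edge is selected. -/
def greedyMatchMem (t : ETree) (q : List ℕ) : Prop :=
  isEdge t q ∧ ∀ q', q' ∈ addrs t → q' ≠ [] → edgeAdj q q' → ewAt t q < ewAt t q' →
    ¬ greedyMatchMem t q'
termination_by (addrs t).countP fun q' => decide (ewAt t q < ewAt t q')
decreasing_by
  rename_i hq hne hadj hlt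
  exact List.countP_lt_countP (addrs t) _ _
    (fun x hx => by
      simp only [decide_eq_true_eq] at *
      exact lt_trans hlt hx) hq (by simpa using hlt) (by simp)

end ETree

namespace ETree

attribute [local simp] List.getElem?_eq_some_iff

lemma mem_addrs_nil (t : ETree) : [] ∈ addrs t := by
  cases t with | node cs => rw [addrs]; exact List.mem_cons_self

lemma mem_addrs_cons {cs : List (ℝ × ETree)} {i : ℕ} {p : List ℕ} :
    (i :: p) ∈ addrs (node cs) ↔ ∃ c, cs[i]? = some c ∧ p ∈ addrs c.2 := by
  rw [addrs]
  simp only [List.mem_cons, List.mem_flatMap, List.mem_range]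
  constructor
  · rintro (h | ⟨a, ha, h⟩)
    · cases h
    · revert h
      split
      · rename_i c hc
        intro h
        obtain ⟨q, hq, heq⟩ := List.mem_map.1 h
        obtain ⟨rfl, rfl⟩ : a = i ∧ q = p := by
          injection heq with h1 h2; exact ⟨h1, h2.symm ▸ rfl⟩
        exact ⟨c, hc, hq⟩
      · intro h; cases h
  · rintro ⟨c, hc, hp⟩
    refine Or.inr ⟨i, ?_, ?_⟩
    · exact (List.getElem?_eq_some_iff.1 hc).1
    · split
      · rename_i c' hc'
        rw [hc] at hc'
        injection hc' with h; subst h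
        exact List.mem_map.2 ⟨p, hp, rfl⟩
      · rename_i hc'
        rw [hc] at hc'; cases hc'

lemma subtreeAt_cons {cs : List (ℝ × ETree)} {i : ℕ} {c : ℝ × ETree}
    (hc : cs[i]? = some c) (p : List ℕ) :
    subtreeAt (node cs) (i :: p) = subtreeAt c.2 p := by
  rw [subtreeAt, hc]

lemma ewAt_cons {cs : List (ℝ × ETree)} {i : ℕ} {c : ℝ × ETree}
    (hc : cs[i]? = some c) {p : List ℕ} (hp : p ≠ []) :
    ewAt (node cs) (i :: p) = ewAt c.2 p := by
  rw [ewAt, hc]; simp [hp]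

lemma ewAt_single {cs : List (ℝ × ETree)} {i : ℕ} {c : ℝ × ETree}
    (hc : cs[i]? = some c) : ewAt (node cs) [i] = c.1 := by
  rw [ewAt, hc]; simp

lemma isEdge_cons {cs : List (ℝ × ETree)} {i : ℕ} {c : ℝ × ETree}
    (hc : cs[i]? = some c) {p : List ℕ} (hp : p ≠ []) :
    isEdge (node cs) (i :: p) ↔ isEdge c.2 p := by
  unfold isEdge
  rw [subtreeAt_cons hc]
  simp [hp]

lemma isEdge_single {cs : List (ℝ × ETree)} {i : ℕ} {c : ℝ × ETree}
    (hc : cs[i]? = some c) : isEdge (node cs) [i] := by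
  refine ⟨by simp, ?_⟩
  rw [subtreeAt_cons hc]
  simp [subtreeAt]

lemma dropLast_ne_self {p : List ℕ} (hp : p ≠ []) : p.dropLast ≠ p := by
  intro h
  have := congrArg List.length h
  rw [List.length_dropLast] at this
  have : p.length ≠ 0 := fun h0 => hp (List.eq_nil_of_length_eq_zero h0)
  omega

lemma edgeAdj_symm {q q' : List ℕ} (h : edgeAdj q q') : edgeAdj q' q := by
  obtain ⟨h1, h2⟩ := h
  exact ⟨Ne.symm h1, by tauto⟩

lemma edgeAdj_cons {i : ℕ} {p p' : List ℕ} (hp : p ≠ []) (hp' : p' ≠ []) :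
    edgeAdj (i :: p) (i :: p') ↔ edgeAdj p p' := by
  unfold edgeAdj
  rw [List.dropLast_cons_of_ne_nil hp, List.dropLast_cons_of_ne_nil hp']
  constructor
  · rintro ⟨h1, h2 | h2 | h2⟩
    · exact ⟨fun h => h1 (by rw [h]), Or.inl (by injection h2)⟩
    · exact ⟨fun h => h1 (by rw [h]), Or.inr (Or.inl (by injection h2))⟩
    · exact ⟨fun h => h1 (by rw [h]), Or.inr (Or.inr (by injection h2))⟩
  · rintro ⟨h1, h2 | h2 | h2⟩
    · exact ⟨fun h => h1 (by injection h), Or.inl (by rw [h2])⟩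
    · exact ⟨fun h => h1 (by injection h), Or.inr (Or.inl (by rw [h2]))⟩
    · exact ⟨fun h => h1 (by injection h), Or.inr (Or.inr (by rw [h2]))⟩

lemma edgeAdj_cons_cases {i : ℕ} {p q' : List ℕ} (hp : p ≠ []) (hq : q' ≠ [])
    (h : edgeAdj (i :: p) q') :
    (q' = [i] ∧ ∃ k, p = [k]) ∨ ∃ p', p' ≠ [] ∧ q' = i :: p' ∧ edgeAdj p p' := by
  obtain ⟨hne, hcase⟩ := h
  obtain ⟨a, r, rfl⟩ := List.exists_cons_of_ne_nil hq
  rw [List.dropLast_cons_of_ne_nil hp] at hcase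
  rcases hcase with h | h | h
  · rcases r with _ | ⟨x, r2⟩
    · simp at h
    · rw [List.dropLast_cons_of_ne_nil (List.cons_ne_nil x r2)] at h
      injection h with h1 h2
      subst h1
      refine Or.inr ⟨x :: r2, List.cons_ne_nil _ _, rfl, ?_, Or.inl h2⟩
      intro heq; exact hne (by rw [heq])
  · injection h with h1 h2
    subst h1
    rcases r with _ | ⟨x, r2⟩
    · left
      refine ⟨rfl, ?_⟩
      obtain ⟨b, p2, rfl⟩ := List.exists_cons_of_ne_nil hp
      have : p2 = [] := by
        rcases p2 with _ | ⟨y, p3⟩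
        · rfl
        · exfalso
          rw [List.dropLast_cons_of_ne_nil (List.cons_ne_nil y p3)] at h2
          exact (List.cons_ne_nil _ _) h2
      subst this
      exact ⟨b, rfl⟩
    · refine Or.inr ⟨x :: r2, List.cons_ne_nil _ _, rfl, ?_, Or.inr (Or.inl h2)⟩
      rw [← h2]
      exact Ne.symm (dropLast_ne_self hp)
  · rcases r with _ | ⟨x, r2⟩
    · simp at h
    · rw [List.dropLast_cons_of_ne_nil (List.cons_ne_nil x r2)] at h
      injection h with h1 h2
      subst h1
      refine Or.inr ⟨x :: r2, List.cons_ne_nil _ _, rfl, ?_, Or.inr (Or.inr h2)⟩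
      rw [← h2]
      exact dropLast_ne_self (List.cons_ne_nil _ _)

lemma edgeAdj_single_cases {i : ℕ} {q' : List ℕ} (hq : q' ≠ [])
    (h : edgeAdj [i] q') :
    (∃ j, q' = [j] ∧ j ≠ i) ∨ ∃ k, q' = [i, k] := by
  obtain ⟨hne, hcase⟩ := h
  obtain ⟨a, r, rfl⟩ := List.exists_cons_of_ne_nil hq
  simp only [List.dropLast_singleton] at hcase
  rcases hcase with h | h | h
  · rcases r with _ | ⟨x, r2⟩
    · exact Or.inl ⟨a, rfl, fun hai => hne (by rw [hai])⟩
    · exfalso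
      rw [List.dropLast_cons_of_ne_nil (List.cons_ne_nil x r2)] at h
      exact (List.cons_ne_nil _ _) h.symm
  · cases h
  · rcases r with _ | ⟨x, r2⟩
    · simp at h
    · rw [List.dropLast_cons_of_ne_nil (List.cons_ne_nil x r2)] at h
      injection h with h1 h2
      subst h1
      have : r2 = [] := by
        rcases r2 with _ | ⟨y, r3⟩
        · rfl
        · exfalso
          rw [List.dropLast_cons_of_ne_nil (List.cons_ne_nil y r3)] at h2
          exact (List.cons_ne_nil _ _) h2
      subst this
      exact Or.inr ⟨x, rfl⟩

lemma edgeAdj_single_single {i j : ℕ} (h : i ≠ j) : edgeAdj [i] [j] := by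
  exact ⟨by simp [h], Or.inl (by simp)⟩

lemma edgeAdj_single_pair {i k : ℕ} : edgeAdj [i] [i, k] := by
  refine ⟨by simp, Or.inr (Or.inr ?_)⟩
  rfl

lemma foldr_max_nonneg (l : List ℝ) : 0 ≤ l.foldr max 0 := by
  induction l with
  | nil => simp
  | cons a l ih => simp only [List.foldr_cons]; exact le_trans ih (le_max_right _ _)

lemma le_foldr_max {l : List ℝ} {x : ℝ} (h : x ∈ l) : x ≤ l.foldr max 0 := by
  induction l with
  | nil => cases h
  | cons a l ih =>
    simp only [List.foldr_cons]
    rcases List.mem_cons.1 h with rfl | h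
    · exact le_max_left _ _
    · exact le_trans (ih h) (le_max_right _ _)

lemma foldr_max_lt {l : List ℝ} {x : ℝ} (hx : 0 < x) (h : ∀ y ∈ l, y < x) :
    l.foldr max 0 < x := by
  induction l with
  | nil => simpa
  | cons a l ih =>
    simp only [List.foldr_cons]
    exact max_lt (h a List.mem_cons_self) (ih fun y hy => h y (List.mem_cons_of_mem _ hy))

lemma foldr_max_le {l : List ℝ} {x : ℝ} (hx : 0 ≤ x) (h : ∀ y ∈ l, y ≤ x) :
    l.foldr max 0 ≤ x := by
  induction l with
  | nil => simpa
  | cons a l ih =>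
    simp only [List.foldr_cons]
    exact max_le (h a List.mem_cons_self) (ih fun y hy => h y (List.mem_cons_of_mem _ hy))

lemma foldr_max_eq {l : List ℝ} {x : ℝ} (hmem : x ∈ l) (hx : 0 ≤ x)
    (h : ∀ y ∈ l, y ≤ x) : l.foldr max 0 = x :=
  le_antisymm (foldr_max_le hx h) (le_foldr_max hmem)

lemma foldr_max_zero {l : List ℝ} (h : ∀ y ∈ l, y = 0) : l.foldr max 0 = 0 := by
  induction l with
  | nil => rfl
  | cons a l ih =>
    simp only [List.foldr_cons]
    rw [h a List.mem_cons_self, ih fun y hy => h y (List.mem_cons_of_mem _ hy)]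
    simp

end ETree
namespace ETree

lemma children_ewAt {t : ETree} {k : ℕ} {d : ℝ × ETree}
    (hd : t.children[k]? = some d) : ewAt t [k] = d.1 := by
  cases t with | node cs =>
  simp only [children] at hd
  exact ewAt_single hd

lemma mem_addrs_cons' {t : ETree} {i : ℕ} {p : List ℕ} :
    (i :: p) ∈ addrs t ↔ ∃ c, t.children[i]? = some c ∧ p ∈ addrs c.2 := by
  cases t with | node cs =>
  simp only [children]
  exact mem_addrs_cons

lemma transfer {cs : List (ℝ × ETree)} {i : ℕ} {c : ℝ × ETree} (hc : cs[i]? = some c) :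
    ∀ n : ℕ, ∀ p : List ℕ, p ≠ [] →
      ((addrs (node cs)).countP fun q' =>
        decide (ewAt (node cs) (i :: p) < ewAt (node cs) q')) ≤ n →
      c.1 < ewAt (node cs) (i :: p) →
      (greedyMatchMem (node cs) (i :: p) ↔ greedyMatchMem c.2 p) := by
  intro n
  induction n using Nat.strong_induction_on with
  | _ n IH =>
  intro p hp hcount hw
  have key : ∀ q', q' ∈ addrs (node cs) → ewAt (node cs) (i :: p) < ewAt (node cs) q' →
      ((addrs (node cs)).countP fun x => decide (ewAt (node cs) q' < ewAt (node cs) x)) <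
      ((addrs (node cs)).countP fun x => decide (ewAt (node cs) (i :: p) < ewAt (node cs) x)) :=
    fun q' hmem hlt => List.countP_lt_countP _ _ _
      (fun x hx => by
        simp only [decide_eq_true_eq] at *
        exact lt_trans hlt hx)
      hmem (by simpa using hlt) (by simp)
  rw [greedyMatchMem, greedyMatchMem]
  constructor
  · rintro ⟨hE, H⟩
    refine ⟨(isEdge_cons hc hp).1 hE, ?_⟩
    intro p' hp'mem hp'ne hadj hlt hM
    have hmem : (i :: p') ∈ addrs (node cs) := mem_addrs_cons.2 ⟨c, hc, hp'mem⟩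
    have hlt' : ewAt (node cs) (i :: p) < ewAt (node cs) (i :: p') := by
      rw [ewAt_cons hc hp, ewAt_cons hc hp'ne]; exact hlt
    have hcnt := key _ hmem hlt'
    have hM' : greedyMatchMem (node cs) (i :: p') :=
      (IH _ (lt_of_lt_of_le hcnt hcount) p' hp'ne le_rfl (lt_trans hw hlt')).2 hM
    exact H (i :: p') hmem (by simp) ((edgeAdj_cons hp hp'ne).2 hadj) hlt' hM'
  · rintro ⟨hE, H⟩
    refine ⟨(isEdge_cons hc hp).2 hE, ?_⟩
    intro q' hq'mem hq'ne hadj hlt hM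
    rcases edgeAdj_cons_cases hp hq'ne hadj with ⟨rfl, k, rfl⟩ | ⟨p', hp'ne, rfl, hadj'⟩
    · rw [ewAt_single hc] at hlt
      exact absurd hlt (not_lt.2 (le_of_lt hw))
    · obtain ⟨c', hc', hp'mem⟩ := mem_addrs_cons.1 hq'mem
      rw [hc] at hc'
      injection hc' with h; subst h
      have hlt2 : ewAt c.2 p < ewAt c.2 p' := by
        rw [← ewAt_cons hc hp, ← ewAt_cons hc hp'ne]; exact hlt
      have hcnt := key _ hq'mem hlt
      have hM' := (IH _ (lt_of_lt_of_le hcnt hcount) p' hp'ne le_rfl (lt_trans hw hlt)).1 hM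
      exact H p' hp'mem hp'ne hadj' hlt2 hM'

lemma root_edge_iff {cs : List (ℝ × ETree)} {i : ℕ} {c : ℝ × ETree} (hc : cs[i]? = some c) :
    greedyMatchMem (node cs) [i] ↔
      ((∀ j, ∀ c' : ℝ × ETree, cs[j]? = some c' → j ≠ i → c.1 < c'.1 →
          ¬ greedyMatchMem (node cs) [j]) ∧
       (∀ k, ∀ d : ℝ × ETree, c.2.children[k]? = some d → c.1 < d.1 →
          ¬ greedyMatchMem c.2 [k])) := by
  have hwik : ∀ (k : ℕ) (d : ℝ × ETree), c.2.children[k]? = some d →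
      ewAt (node cs) [i, k] = d.1 := fun k d hd => by
    rw [ewAt_cons hc (by simp)]; exact children_ewAt hd
  have htrans : ∀ (k : ℕ) (d : ℝ × ETree), c.2.children[k]? = some d → c.1 < d.1 →
      (greedyMatchMem (node cs) [i, k] ↔ greedyMatchMem c.2 [k]) := fun k d hd hlt =>
    transfer hc _ [k] (by simp) le_rfl (by rw [hwik k d hd]; exact hlt)
  rw [greedyMatchMem]
  constructor
  · rintro ⟨hE, H⟩
    constructor
    · intro j c' hc' hji hlt hM
      refine H [j] (mem_addrs_cons.2 ⟨c', hc', mem_addrs_nil _⟩) (by simp)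
        (edgeAdj_single_single (Ne.symm hji)) ?_ hM
      rw [ewAt_single hc, ewAt_single hc']; exact hlt
    · intro k d hd hlt hM
      have hmem : [i, k] ∈ addrs (node cs) :=
        mem_addrs_cons.2 ⟨c, hc, mem_addrs_cons'.2 ⟨d, hd, mem_addrs_nil _⟩⟩
      exact H [i, k] hmem (by simp) edgeAdj_single_pair
        (by rw [ewAt_single hc, hwik k d hd]; exact hlt) ((htrans k d hd hlt).2 hM)
  · rintro ⟨H1, H2⟩
    refine ⟨isEdge_single hc, ?_⟩
    intro q' hq'mem hq'ne hadj hlt hM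
    rcases edgeAdj_single_cases hq'ne hadj with ⟨j, rfl, hji⟩ | ⟨k, rfl⟩
    · obtain ⟨c', hc', -⟩ := mem_addrs_cons.1 hq'mem
      rw [ewAt_single hc, ewAt_single hc'] at hlt
      exact H1 j c' hc' hji hlt hM
    · obtain ⟨c0, hc0, hk⟩ := mem_addrs_cons.1 hq'mem
      rw [hc] at hc0
      injection hc0 with h; subst h
      obtain ⟨d, hd, -⟩ := mem_addrs_cons'.1 hk
      rw [ewAt_single hc, hwik k d hd] at hlt
      exact H2 k d hd hlt ((htrans k d hd hlt).1 hM)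

end ETree
namespace ETree

lemma main_aux : ∀ n : ℕ, ∀ s : ETree, sizeOf s ≤ n →
    (∀ q ∈ s.addrs, q ≠ [] → 0 < s.ewAt q) →
    (∀ q ∈ s.addrs, ∀ q' ∈ s.addrs, q ≠ [] → q' ≠ [] → q ≠ q' → s.ewAt q ≠ s.ewAt q') →
    s.mbonus = (((List.range s.children.length).map fun i =>
        if s.greedyMatchMem [i] then s.ewAt [i] else 0).foldr max 0) := by
  intro n
  induction n using Nat.strong_induction_on with
  | _ n IH =>
  intro s hsz hpos hdist
  obtain ⟨cs⟩ := s
  -- basic facts for a child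
  have hmemj : ∀ (j : ℕ) (c : ℝ × ETree), cs[j]? = some c → [j] ∈ addrs (node cs) :=
    fun j c hc => mem_addrs_cons.2 ⟨c, hc, mem_addrs_nil _⟩
  have hposj : ∀ (j : ℕ) (c : ℝ × ETree), cs[j]? = some c → 0 < c.1 := by
    intro j c hc
    rw [← ewAt_single hc]
    exact hpos [j] (hmemj j c hc) (by simp)
  -- the key equivalence for each child: "no heavier child edge of c is selected" ↔ mbonus < weight
  have hE : ∀ (j : ℕ) (c : ℝ × ETree), cs[j]? = some c →
      ((∀ (k : ℕ) (d : ℝ × ETree), c.2.children[k]? = some d → c.1 < d.1 →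
          ¬ greedyMatchMem c.2 [k]) ↔ mbonus c.2 < c.1) := by
    intro j c hc
    have hpos_c : ∀ q ∈ addrs c.2, q ≠ [] → 0 < ewAt c.2 q := by
      intro q hq hne
      rw [← ewAt_cons hc hne]
      exact hpos (j :: q) (mem_addrs_cons.2 ⟨c, hc, hq⟩) (by simp)
    have hdist_c : ∀ q ∈ addrs c.2, ∀ q' ∈ addrs c.2, q ≠ [] → q' ≠ [] → q ≠ q' →
        ewAt c.2 q ≠ ewAt c.2 q' := by
      intro q hq q' hq' hne hne' hqq'
      rw [← ewAt_cons hc hne, ← ewAt_cons hc hne']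
      exact hdist (j :: q) (mem_addrs_cons.2 ⟨c, hc, hq⟩) (j :: q')
        (mem_addrs_cons.2 ⟨c, hc, hq'⟩) (by simp) (by simp)
        (fun h => hqq' (by injection h))
    have hsz_c : sizeOf c.2 < n := by
      have hmem : c ∈ cs := by
        obtain ⟨hlt, rfl⟩ := List.getElem?_eq_some_iff.mp hc
        exact List.getElem_mem hlt
      have h1 := List.sizeOf_lt_of_mem hmem
      have h2 : sizeOf c.2 < sizeOf c := by
        obtain ⟨a, b⟩ := c
        simp only [Prod.mk.sizeOf_spec]
        omega
      have h3 : sizeOf (node cs) = 1 + sizeOf cs := by simp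
      omega
    have IHc := IH (sizeOf c.2) hsz_c c.2 le_rfl hpos_c hdist_c
    have hposc1 := hposj j c hc
    rw [IHc]
    constructor
    · intro H
      apply foldr_max_lt hposc1
      intro y hy
      obtain ⟨k, hk, rfl⟩ := List.mem_map.1 hy
      rw [List.mem_range] at hk
      by_cases hMk : greedyMatchMem c.2 [k]
      · rw [if_pos hMk]
        have hd : c.2.children[k]? = some c.2.children[k] := List.getElem?_eq_getElem hk
        rw [children_ewAt hd]
        by_contra hge
        push_neg at hge
        have hne : c.1 ≠ (c.2.children[k]).1 := by
          have hmemjk : (j :: [k]) ∈ addrs (node cs) :=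
            mem_addrs_cons.2 ⟨c, hc, mem_addrs_cons'.2 ⟨_, hd, mem_addrs_nil _⟩⟩
          have := hdist [j] (hmemj j c hc) (j :: [k]) hmemjk (by simp) (by simp) (by simp)
          rw [ewAt_single hc, ewAt_cons hc (by simp), children_ewAt hd] at this
          exact this
        exact H k _ hd (lt_of_le_of_ne hge hne) hMk
      · rw [if_neg hMk]
        exact hposc1
    · intro H k d hd hlt hMk
      have hk : k < c.2.children.length := (List.getElem?_eq_some_iff.1 hd).1
      have hmem : ewAt c.2 [k] ∈ (List.range c.2.children.length).map
          fun k => if greedyMatchMem c.2 [k] then ewAt c.2 [k] else 0 := by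
        refine List.mem_map.2 ⟨k, List.mem_range.2 hk, ?_⟩
        rw [if_pos hMk]
      have h1 := le_foldr_max hmem
      rw [children_ewAt hd] at h1
      linarith
  -- forward: selected implies the "bonus" condition
  have hMvalid : ∀ j, greedyMatchMem (node cs) [j] → ∃ c : ℝ × ETree, cs[j]? = some c := by
    intro j hM
    rw [greedyMatchMem] at hM
    obtain ⟨⟨-, hS⟩, -⟩ := hM
    rw [subtreeAt] at hS
    cases hcj : cs[j]? with
    | none => rw [hcj] at hS; simp at hS
    | some c => exact ⟨c, rfl⟩
  have hMP : ∀ (j : ℕ) (c : ℝ × ETree), cs[j]? = some c → greedyMatchMem (node cs) [j] →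
      mbonus c.2 < c.1 := by
    intro j c hc hM
    exact (hE j c hc).1 ((root_edge_iff hc).1 hM).2
  set P : ℕ → Prop := fun j => ∃ c : ℝ × ETree, cs[j]? = some c ∧ mbonus c.2 < c.1 with hP
  rw [mbonus]
  simp only [children]
  by_cases hS : ∃ j, P j
  · -- there is a child with positive bonus condition; take the max-weight one
    obtain ⟨j0, hj0⟩ := hS
    have hj0' : j0 ∈ (Finset.range cs.length).filter P := by
      refine Finset.mem_filter.2 ⟨?_, hj0⟩
      obtain ⟨c, hc, -⟩ := hj0
      exact Finset.mem_range.2 (List.getElem?_eq_some_iff.1 hc).1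
    obtain ⟨jm, hjmf, hmax⟩ := Finset.exists_max_image
      ((Finset.range cs.length).filter P) (fun j => ewAt (node cs) [j]) ⟨j0, hj0'⟩
    obtain ⟨hjmr, cm, hcm, hPm⟩ : jm ∈ Finset.range cs.length ∧ P jm := Finset.mem_filter.1 hjmf
    have hMjm : greedyMatchMem (node cs) [jm] := by
      rw [root_edge_iff hcm]
      refine ⟨?_, (hE jm cm hcm).2 hPm⟩
      intro j' c' hc' hne hlt hM
      have hPj' : P j' := ⟨c', hc', hMP j' c' hc' hM⟩
      have hj'f : j' ∈ (Finset.range cs.length).filter P :=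
        Finset.mem_filter.2 ⟨Finset.mem_range.2 (List.getElem?_eq_some_iff.1 hc').1, hPj'⟩
      have hle := hmax j' hj'f
      rw [ewAt_single hc', ewAt_single hcm] at hle
      exact absurd hlt (not_lt.2 hle)
    have hMonly : ∀ j, j ≠ jm → ¬ greedyMatchMem (node cs) [j] := by
      intro j hne hM
      obtain ⟨c, hc⟩ := hMvalid j hM
      have hPj : P j := ⟨c, hc, hMP j c hc hM⟩
      have hjf : j ∈ (Finset.range cs.length).filter P :=
        Finset.mem_filter.2 ⟨Finset.mem_range.2 (List.getElem?_eq_some_iff.1 hc).1, hPj⟩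
      have hle := hmax j hjf
      have hnew : ewAt (node cs) [j] ≠ ewAt (node cs) [jm] :=
        hdist [j] (hmemj j c hc) [jm] (hmemj jm cm hcm) (by simp) (by simp) (by simp [hne])
      have hlt : ewAt (node cs) [j] < ewAt (node cs) [jm] := lt_of_le_of_ne hle hnew
      rw [ewAt_single hc, ewAt_single hcm] at hlt
      exact ((root_edge_iff hc).1 hM).1 jm cm hcm (Ne.symm hne) hlt hMjm
    -- both sides equal cm.1
    have hposm := hposj jm cm hcm
    have hmaxw : ∀ (j : ℕ) (c : ℝ × ETree), cs[j]? = some c → mbonus c.2 < c.1 → c.1 ≤ cm.1 := by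
      intro j c hc hPj
      have hjf : j ∈ (Finset.range cs.length).filter P :=
        Finset.mem_filter.2 ⟨Finset.mem_range.2 (List.getElem?_eq_some_iff.1 hc).1, ⟨c, hc, hPj⟩⟩
      have hle := hmax j hjf
      rwa [ewAt_single hc, ewAt_single hcm] at hle
    have hR : ((List.range cs.length).map fun i =>
        if greedyMatchMem (node cs) [i] then ewAt (node cs) [i] else 0).foldr max 0 = cm.1 := by
      apply foldr_max_eq
      · refine List.mem_map.2 ⟨jm, List.mem_range.2 (Finset.mem_range.1 hjmr), ?_⟩
        rw [if_pos hMjm, ewAt_single hcm]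
      · exact le_of_lt hposm
      · intro y hy
        obtain ⟨j, hj, rfl⟩ := List.mem_map.1 hy
        by_cases hMj : greedyMatchMem (node cs) [j]
        · by_cases hje : j = jm
          · subst hje
            rw [if_pos hMj, ewAt_single hcm]
          · exact absurd hMj (hMonly j hje)
        · rw [if_neg hMj]
          exact le_of_lt hposm
    have hL : (cs.attach.map fun c => if mbonus c.1.2 < c.1.1 then c.1.1 else 0).foldr max 0
        = cm.1 := by
      apply foldr_max_eq
      · have hmemcs : cm ∈ cs := by
          obtain ⟨hlt, rfl⟩ := List.getElem?_eq_some_iff.mp hcm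
          exact List.getElem_mem hlt
        refine List.mem_map.2 ⟨⟨cm, hmemcs⟩, List.mem_attach _ _, ?_⟩
        exact if_pos hPm
      · exact le_of_lt hposm
      · intro y hy
        obtain ⟨⟨c, hcmem⟩, -, rfl⟩ := List.mem_map.1 hy
        by_cases hPc : mbonus c.2 < c.1
        · have h1 : (if mbonus c.2 < c.1 then c.1 else 0) = c.1 := if_pos hPc
          rw [h1]
          obtain ⟨j, hjlt, rfl⟩ := List.mem_iff_getElem.1 hcmem
          exact hmaxw j _ (List.getElem?_eq_getElem hjlt) hPc
        · have h1 : (if mbonus c.2 < c.1 then c.1 else 0) = 0 := if_neg hPc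
          rw [h1]
          exact le_of_lt hposm
    rw [hL, hR]
  · push_neg at hS
    have hL : (cs.attach.map fun c => if mbonus c.1.2 < c.1.1 then c.1.1 else 0).foldr max 0
        = 0 := by
      apply foldr_max_zero
      intro y hy
      obtain ⟨⟨c, hcmem⟩, -, rfl⟩ := List.mem_map.1 hy
      have hnc : ¬ mbonus c.2 < c.1 := by
        intro hPc
        obtain ⟨j, hjlt, hceq⟩ := List.mem_iff_getElem.1 hcmem
        exact hS j ⟨c, by rw [List.getElem?_eq_getElem hjlt, hceq], hPc⟩
      exact if_neg hnc
    have hR : ((List.range cs.length).map fun i =>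
        if greedyMatchMem (node cs) [i] then ewAt (node cs) [i] else 0).foldr max 0 = 0 := by
      apply foldr_max_zero
      intro y hy
      obtain ⟨j, -, rfl⟩ := List.mem_map.1 hy
      have hnM : ¬ greedyMatchMem (node cs) [j] := by
        intro hM
        obtain ⟨c, hc⟩ := hMvalid j hM
        exact hS j ⟨c, hc, hMP j c hc hM⟩
      exact if_neg hnM
    rw [hL, hR]

lemma subtree_lift : ∀ (p : List ℕ) (t s : ETree), subtreeAt t p = some s →
    (∀ q ∈ addrs s, p ++ q ∈ addrs t) ∧
    (∀ q : List ℕ, q ≠ [] → ewAt t (p ++ q) = ewAt s q) := by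
  intro p
  induction p with
  | nil =>
    intro t s h
    rw [subtreeAt] at h
    injection h with h
    subst h
    exact ⟨fun q hq => hq, fun q _ => rfl⟩
  | cons i p IH =>
    intro t s h
    obtain ⟨cs⟩ := t
    rw [subtreeAt] at h
    cases hc : cs[i]? with
    | none => rw [hc] at h; cases h
    | some c =>
      rw [hc] at h
      obtain ⟨IH1, IH2⟩ := IH c.2 s h
      constructor
      · intro q hq
        exact mem_addrs_cons.2 ⟨c, hc, IH1 q hq⟩
      · intro q hqne
        have hne : p ++ q ≠ [] := by simp [hqne]
        rw [List.cons_append, ewAt_cons hc hne, IH2 q hqne]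

end ETree
open ETree in
/-- For a rooted tree with distinct positive edge weights, for every node `i` the matching
bonus `MS(i)` equals the maximum over the children `j` of `i` of
`W_{ij} · 1{the edge (i,j) belongs to the greedy matching of the subtree rooted at i}`. -/
theorem mbonus_eq_max_greedy_matching (t : ETree)
    (hpos : ∀ q ∈ t.addrs, q ≠ [] → 0 < t.ewAt q)
    (hdist : ∀ q ∈ t.addrs, ∀ q' ∈ t.addrs, q ≠ [] → q' ≠ [] → q ≠ q' →
      t.ewAt q ≠ t.ewAt q') :
    ∀ p ∈ t.addrs, ∀ s : ETree, t.subtreeAt p = some s →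
      s.mbonus =
        (((List.range s.children.length).map fun i =>
            if s.greedyMatchMem [i] then s.ewAt [i] else 0).foldr max 0) := by
  intro p hp s hs
  obtain ⟨H1, H2⟩ := subtree_lift p t s hs
  refine main_aux (sizeOf s) s le_rfl ?_ ?_
  · intro q hq hqne
    rw [← H2 q hqne]
    exact hpos (p ++ q) (H1 q hq) (by simp [hqne])
  · intro q hq q' hq' hqne hq'ne hqq'
    rw [← H2 q hqne, ← H2 q' hq'ne]
    exact hdist (p ++ q) (H1 q hq) (p ++ q') (H1 q' hq') (by simp [hqne]) (by simp [hq'ne])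
      (fun h => hqq' (List.append_cancel_left h))
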